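/- Let 𝒞 and 𝒞' be collections of cells over a field K with 𝒞' ⊂ 𝒞, and suppose that every cell A ∈ 𝒞 \ 𝒞' has at least one edge both of whose endpoints lie in V(𝒞) \ V(𝒞'). If the adjacent 2-minor ideal I_adj(𝒞') (an ideal of S_{𝒞'}) is not a radical ideal, then the adjacent 2-minor ideal I_adj(𝒞) (an ideal of S_𝒞) is not a radical ideal. -/

import Mathlib

open MvPolynomial

/-- The vertex set of the cell with lower-left corner `a`. -/
def cellVerts (a : ℤ × ℤ) : Finset (ℤ × ℤ) :=
  {a, a + (1, 0), a + (0, 1), a + (1, 1)}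

/-- The edges of the cell with lower-left corner `a`, recorded as ordered pairs
of their two endpoints: `{a,c}`, `{c,b}`, `{b,d}`, `{a,d}` where `b = a+(1,1)`,
`c = a+(0,1)`, `d = a+(1,0)`. -/
def cellEdges (a : ℤ × ℤ) : Finset ((ℤ × ℤ) × (ℤ × ℤ)) :=
  {(a, a + (0, 1)), (a + (0, 1), a + (1, 1)), (a + (1, 1), a + (1, 0)), (a, a + (1, 0))}

/-- The vertex set of a collection of cells; cells are recorded by their
lower-left corners. -/
def verts (C : Finset (ℤ × ℤ)) : Finset (ℤ × ℤ) :=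
  C.biUnion cellVerts

lemma mem_verts {C : Finset (ℤ × ℤ)} {a v : ℤ × ℤ} (ha : a ∈ C)
    (hv : v ∈ cellVerts a) : v ∈ verts C :=
  Finset.mem_biUnion.mpr ⟨a, ha, hv⟩

lemma corner_mem00 (a : ℤ × ℤ) : a ∈ cellVerts a := by simp [cellVerts]
lemma corner_mem10 (a : ℤ × ℤ) : a + (1, 0) ∈ cellVerts a := by simp [cellVerts]
lemma corner_mem01 (a : ℤ × ℤ) : a + (0, 1) ∈ cellVerts a := by simp [cellVerts]
lemma corner_mem11 (a : ℤ × ℤ) : a + (1, 1) ∈ cellVerts a := by simp [cellVerts]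

/-- The adjacent 2-minor ideal `I_adj(𝒞)` of a collection of cells, inside the
polynomial ring `S_𝒞 = K[x_v : v ∈ V(𝒞)]`. -/
noncomputable def adjIdeal (K : Type*) [Field K] (C : Finset (ℤ × ℤ)) :
    Ideal (MvPolynomial {v // v ∈ verts C} K) :=
  Ideal.span {f | ∃ a, ∃ ha : a ∈ C,
    f = X ⟨a, mem_verts ha (corner_mem00 a)⟩ *
          X ⟨a + (1, 1), mem_verts ha (corner_mem11 a)⟩ -
        X ⟨a + (0, 1), mem_verts ha (corner_mem01 a)⟩ *
          X ⟨a + (1, 0), mem_verts ha (corner_mem10 a)⟩}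

/-- The vector `v_C = e_a + e_b - e_c - e_d ∈ ℤ^{V(𝒞)}` attached to the cell
with lower-left corner `a` (so `b = a+(1,1)`, `c = a+(0,1)`, `d = a+(1,0)`). -/
def cellVec (C : Finset (ℤ × ℤ)) (a : ℤ × ℤ) : {v // v ∈ verts C} → ℤ :=
  fun w => ((if w.1 = a then 1 else 0) + (if w.1 = a + (1, 1) then 1 else 0)
    - (if w.1 = a + (0, 1) then 1 else 0)) - (if w.1 = a + (1, 0) then 1 else 0)

/-- The lattice `Λ_𝒟 ⊆ ℤ^{V(𝒞)}` generated by the vectors `v_C`, `C ∈ 𝒟`,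
for a subcollection `𝒟` of `𝒞`. -/
def cellLattice (C : Finset (ℤ × ℤ)) (D : Set (ℤ × ℤ)) :
    AddSubgroup ({v // v ∈ verts C} → ℤ) :=
  AddSubgroup.closure {g | ∃ a ∈ D, g = cellVec C a}

/-- The lattice ideal `L_𝒟 ⊆ S_𝒞` of a subcollection `𝒟` of `𝒞`. -/
noncomputable def latticeIdeal (K : Type*) [Field K] (C : Finset (ℤ × ℤ))
    (D : Set (ℤ × ℤ)) : Ideal (MvPolynomial {v // v ∈ verts C} K) :=
  Ideal.span {f | ∃ e ∈ cellLattice C D,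
    f = (∏ w, X w ^ (e w).toNat) - ∏ w, X w ^ (-(e w)).toNat}

/-- `W ⊆ V(𝒞)` is admissible: for each cell `C ∈ 𝒞`, either `W ∩ C = ∅` or
`W ∩ C` contains an edge of `C`. -/
def Admissible (C : Finset (ℤ × ℤ)) (W : Set (ℤ × ℤ)) : Prop :=
  W ⊆ ↑(verts C) ∧ ∀ a ∈ C, (∀ v ∈ cellVerts a, v ∉ W) ∨
    ∃ e ∈ cellEdges a, e.1 ∈ W ∧ e.2 ∈ W

/-- The subcollection `𝒞_W` of cells of `𝒞` disjoint from `W`. -/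
def subcollW (C : Finset (ℤ × ℤ)) (W : Set (ℤ × ℤ)) : Set (ℤ × ℤ) :=
  {a | a ∈ C ∧ ∀ v ∈ cellVerts a, v ∉ W}

/-- The ideal `P_W(𝒞) = (x_w : w ∈ W) + L_{𝒞_W}`. -/
noncomputable def PW (K : Type*) [Field K] (C : Finset (ℤ × ℤ))
    (W : Set (ℤ × ℤ)) : Ideal (MvPolynomial {v // v ∈ verts C} K) :=
  Ideal.span {f | ∃ v : {v // v ∈ verts C}, v.1 ∈ W ∧ f = X v} +
    latticeIdeal K C (subcollW C W)

/-- The height of an ideal: the infimum of `Order.height 𝔭` over the prime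
ideals `𝔭` containing it (equivalently, over its minimal primes); for a prime
ideal this is just its height. -/
noncomputable def idealHeight {R : Type*} [CommRing R] (I : Ideal R) : ℕ∞ :=
  ⨅ p ∈ {p : PrimeSpectrum R | I ≤ p.asIdeal}, Order.height p

/-- A collection of cells is weakly connected if any two of its cells are
joined by a sequence of cells of the collection in which consecutive cells
share at least one vertex. -/
def WeaklyConnected (C : Finset (ℤ × ℤ)) : Prop :=
  ∀ a ∈ C, ∀ b ∈ C, Relation.ReflTransGen
    (fun p q => p ∈ C ∧ q ∈ C ∧ ((cellVerts p ∩ cellVerts q).Nonempty)) a b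

/-- `𝒞` contains a square tetromino. -/
def HasSquareTetromino (C : Finset (ℤ × ℤ)) : Prop :=
  ∃ a : ℤ × ℤ, a ∈ C ∧ a + (1, 0) ∈ C ∧ a + (0, 1) ∈ C ∧ a + (1, 1) ∈ C

/-- `𝒞` contains an X-pentomino. -/
def HasXPentomino (C : Finset (ℤ × ℤ)) : Prop :=
  ∃ a : ℤ × ℤ, a ∈ C ∧ a + (1, 0) ∈ C ∧ a - (1, 0) ∈ C ∧
    a + (0, 1) ∈ C ∧ a - (0, 1) ∈ C

/-- Row convexity of a collection of cells. -/
def RowConvex (C : Finset (ℤ × ℤ)) : Prop :=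
  ∀ a ∈ C, ∀ b ∈ C, a.2 = b.2 → ∀ r : ℤ, a.1 ≤ r → r ≤ b.1 → (r, a.2) ∈ C

/-- Column convexity of a collection of cells. -/
def ColConvex (C : Finset (ℤ × ℤ)) : Prop :=
  ∀ a ∈ C, ∀ b ∈ C, a.1 = b.1 → ∀ s : ℤ, a.2 ≤ s → s ≤ b.2 → (a.1, s) ∈ C

/-- The inclusion of vertex subtypes induced by `verts C' ⊆ verts C`. -/
def jmap {C C' : Finset (ℤ × ℤ)} (h : verts C' ⊆ verts C) :
    {v // v ∈ verts C'} → {v // v ∈ verts C} :=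
  fun v => ⟨v.1, h v.2⟩

/-- The substitution sending `x_v ↦ x_v` for `v ∈ V(C')` and `x_v ↦ 0`
otherwise. -/
noncomputable def gmap (K : Type*) [Field K] (C C' : Finset (ℤ × ℤ)) :
    {v // v ∈ verts C} → MvPolynomial {v // v ∈ verts C'} K :=
  fun w => if h : w.1 ∈ verts C' then X ⟨w.1, h⟩ else 0

lemma verts_subset {C C' : Finset (ℤ × ℤ)} (h : C' ⊆ C) : verts C' ⊆ verts C := by
  intro v hv
  rcases Finset.mem_biUnion.mp hv with ⟨a, ha, hva⟩
  exact mem_verts (h ha) hva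

/-- If `𝒞' ⊂ 𝒞` and every cell of `𝒞 \ 𝒞'` has an edge with
both endpoints in `V(𝒞) \ V(𝒞')`, then non-radicality of `I_adj(𝒞')`
implies non-radicality of `I_adj(𝒞)`. -/
theorem stmt_14 (K : Type*) [Field K] (C C' : Finset (ℤ × ℤ)) (hC' : C'.Nonempty)
    (hsub : C' ⊂ C)
    (hedge : ∀ a ∈ C, a ∉ C' → ∃ e ∈ cellEdges a,
      e.1 ∈ verts C ∧ e.1 ∉ verts C' ∧ e.2 ∈ verts C ∧ e.2 ∉ verts C')
    (hrad : (adjIdeal K C').radical ≠ adjIdeal K C') :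
    (adjIdeal K C).radical ≠ adjIdeal K C := by
  intro hC
  apply hrad
  have hvsub : verts C' ⊆ verts C := verts_subset hsub.1
  have hιmap : Ideal.map (rename (R := K) (jmap hvsub)) (adjIdeal K C') ≤ adjIdeal K C := by
    rw [adjIdeal, Ideal.map_span]
    apply Ideal.span_le.mpr
    rintro _ ⟨f, ⟨a, ha, rfl⟩, rfl⟩
    apply Ideal.subset_span
    refine ⟨a, hsub.1 ha, ?_⟩
    simp only [map_sub, map_mul, rename_X]
    rfl
  have hφmap : Ideal.map (aeval (R := K) (gmap K C C')) (adjIdeal K C) ≤ adjIdeal K C' := by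
    rw [adjIdeal, Ideal.map_span]
    apply Ideal.span_le.mpr
    rintro _ ⟨f, ⟨a, ha, rfl⟩, rfl⟩
    by_cases ha' : a ∈ C'
    · apply Ideal.subset_span
      refine ⟨a, ha', ?_⟩
      simp only [map_sub, map_mul, aeval_X, gmap]
      rw [dif_pos (mem_verts ha' (corner_mem00 a)), dif_pos (mem_verts ha' (corner_mem11 a)),
        dif_pos (mem_verts ha' (corner_mem01 a)), dif_pos (mem_verts ha' (corner_mem10 a))]
    · obtain ⟨e, he, _, h1', _, h2'⟩ := hedge a ha ha'
      simp only [cellEdges, Finset.mem_insert, Finset.mem_singleton] at he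
      rcases he with rfl | rfl | rfl | rfl <;>
        dsimp only at h1' h2' <;>
        simp only [map_sub, map_mul, aeval_X, gmap] <;>
        rw [dif_neg h1', dif_neg h2'] <;>
        simp
  refine le_antisymm ?_ Ideal.le_radical
  intro f hf
  obtain ⟨n, hn⟩ := hf
  have hin : rename (R := K) (jmap hvsub) f ∈ adjIdeal K C := by
    rw [← hC]
    exact ⟨n, by rw [← map_pow]; exact hιmap (Ideal.mem_map_of_mem _ hn)⟩
  have hmem := hφmap (Ideal.mem_map_of_mem _ hin)
  have heq : aeval (gmap K C C') (rename (jmap hvsub) f) = f := by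
    rw [aeval_rename]
    have hgj : (gmap K C C' ∘ jmap hvsub) = X := by
      funext v
      simp only [Function.comp_apply, gmap, jmap]
      exact dif_pos v.2
    rw [hgj, aeval_X_left_apply]
  rwa [heq] at hmem
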